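/- Border rank is strictly subadditive under direct sum for tensors of order four: let n₁, n₂, n₃ ≥ 2 be integers with n₁ odd and (n₁−1)(n₂−1)(n₃−1) ≥ 4, let N = (n₁−1)(n₂−1)(n₃−1)/2, let T₁ = Σ_{i₁=0}^{n₁} Σ_{i₂=0}^{n₂} Σ_{i₃=0}^{n₃} e_{i₁} ⊗ e_{i₂} ⊗ e_{i₃} ⊗ e_{(i₁,i₂,i₃)} ∈ ℂ^{n₁+1} ⊗ ℂ^{n₂+1} ⊗ ℂ^{n₃+1} ⊗ ℂ^{(n₁+1)(n₂+1)(n₃+1)} and let T₂ = Σ_{j=1}^{N} e_j ⊗ e_j ⊗ e₀ ⊗ e₀ ∈ ℂ^N ⊗ ℂ^N ⊗ ℂ¹ ⊗ ℂ¹. Then R̲(T₁ ⊕ T₂) < R̲(T₁) + R̲(T₂). -/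

import Mathlib

open Finset

namespace Subadditivity

noncomputable section

/-- A tensor of order `k` over `ℂ` with `i`-th factor the space `ℂ^{ι i}` of complex-valued
functions on the finite index type `ι i`; the tensor is represented by the array of its
coordinates with respect to the standard basis, i.e. by an element of
`ℂ^{ι 0} ⊗ ⋯ ⊗ ℂ^{ι (k-1)} ≃ ((∀ i, ι i) → ℂ)`. -/
abbrev Tensor {k : ℕ} (ι : Fin k → Type) : Type := (∀ i, ι i) → ℂ

/-- `T` is a sum of `r` simple (rank-one) tensors `v j 0 ⊗ ⋯ ⊗ v j (k-1)`. -/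
def HasRankLE {k : ℕ} {ι : Fin k → Type} (T : Tensor ι) (r : ℕ) : Prop :=
  ∃ v : Fin r → (∀ i, ι i → ℂ), T = fun x => ∑ j : Fin r, ∏ i : Fin k, v j i (x i)

/-- Tensor rank: the least `r` such that `T` is a sum of `r` simple tensors. -/
noncomputable def rank {k : ℕ} {ι : Fin k → Type} (T : Tensor ι) : ℕ :=
  sInf {r | HasRankLE T r}

/-- Border rank is at most `r`: `T` lies in the closure of the set of tensors of rank `≤ r`. -/
def HasBorderRankLE {k : ℕ} {ι : Fin k → Type} (T : Tensor ι) (r : ℕ) : Prop :=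
  T ∈ closure {S : Tensor ι | HasRankLE S r}

/-- Border rank. -/
noncomputable def borderRank {k : ℕ} {ι : Fin k → Type} (T : Tensor ι) : ℕ :=
  sInf {r | HasBorderRankLE T r}

open scoped Classical in
/-- Direct sum of two tensors of order `k`: the coordinates supported on the `ι`-part are
those of `T`, the coordinates supported on the `κ`-part are those of `S`, and all mixed
coordinates vanish. -/
noncomputable def dsum {k : ℕ} {ι κ : Fin k → Type} (T : Tensor ι) (S : Tensor κ) :
    Tensor (fun i => ι i ⊕ κ i) := fun x =>
  (if h : ∃ y : ∀ i, ι i, x = fun i => Sum.inl (y i) then T h.choose else 0) +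
  (if h : ∃ z : ∀ i, κ i, x = fun i => Sum.inr (z i) then S h.choose else 0)

/-- Kronecker product of two tensors of order `k`. -/
def kron {k : ℕ} {ι κ : Fin k → Type} (T : Tensor ι) (S : Tensor κ) :
    Tensor (fun i => ι i × κ i) := fun x =>
  T (fun i => (x i).1) * S (fun i => (x i).2)

/-- `N`-th Kronecker power of a tensor of order `k`. -/
def kpow {k : ℕ} {ι : Fin k → Type} (T : Tensor ι) (N : ℕ) :
    Tensor (fun i => Fin N → ι i) := fun x => ∏ j : Fin N, T (fun i => x i j)

/-- The unit tensor `u_k(r) = Σ_{j=1}^r e_j ⊗ ⋯ ⊗ e_j` of order `k`. -/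
def unit (k r : ℕ) : Tensor (fun _ : Fin k => Fin r) := fun x =>
  ∑ j : Fin r, ∏ i : Fin k, (if x i = j then (1 : ℂ) else 0)

/-- `S` is a degeneration of `T`: `S` lies in the closure of the set of tensors obtained
from `T` by applying linear maps `A i` on each factor. -/
def Degen {k : ℕ} {ι κ : Fin k → Type} [∀ i, Fintype (κ i)]
    (S : Tensor ι) (T : Tensor κ) : Prop :=
  S ∈ closure {S' : Tensor ι | ∃ A : ∀ i, ι i → κ i → ℂ,
    S' = fun x => ∑ y : ∀ i, κ i, (∏ i : Fin k, A i (x i) (y i)) * T y}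

/-- Kronecker delta. -/
def delta {α : Type} [DecidableEq α] (a b : α) : ℂ := if a = b then 1 else 0

/-- The order-4 "spider" tensor
`Σ_{i₁,i₂,i₃} e_{i₁} ⊗ e_{i₂} ⊗ e_{i₃} ⊗ e_{(i₁,i₂,i₃)} ∈ ℂ^{m₁} ⊗ ℂ^{m₂} ⊗ ℂ^{m₃} ⊗ ℂ^{m₁m₂m₃}`,
the last factor being indexed by triples. -/
def spider3 (m₁ m₂ m₃ : ℕ) :
    Tensor ![Fin m₁, Fin m₂, Fin m₃, Fin m₁ × Fin m₂ × Fin m₃] := fun x =>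
  delta (α := Fin m₁ × Fin m₂ × Fin m₃) (x 3) (x 0, x 1, x 2)

/-- The order-4 tensor `Σ_{j=1}^N e_j ⊗ e_j ⊗ e₀ ⊗ e₀ ∈ ℂ^N ⊗ ℂ^N ⊗ ℂ¹ ⊗ ℂ¹`. -/
def matTensor4 (N : ℕ) : Tensor ![Fin N, Fin N, Fin 1, Fin 1] := fun x =>
  delta (α := Fin N) (x 0) (x 1)

/-- The order-4 tensor `Σ_{ℓ=1}^M e_ℓ ⊗ e_ℓ ⊗ e_ℓ ⊗ e₀ ∈ ℂ^M ⊗ ℂ^M ⊗ ℂ^M ⊗ ℂ¹`. -/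
def ghz4 (M : ℕ) : Tensor ![Fin M, Fin M, Fin M, Fin 1] := fun x =>
  delta (α := Fin M) (x 0) (x 1) * delta (α := Fin M) (x 1) (x 2)


/-! ### Auxiliary material for the proof -/

section AuxGeneral

open Filter Topology

def mk4 {τ : Fin 4 → Type} (f₀ : τ 0) (f₁ : τ 1) (f₂ : τ 2) (f₃ : τ 3) : ∀ i, τ i :=
  Fin.cons f₀ (Fin.cons f₁ (Fin.cons f₂ (Fin.cons f₃ finZeroElim)))

@[simp] lemma mk4_zero {τ : Fin 4 → Type} (f₀ : τ 0) (f₁ : τ 1) (f₂ : τ 2) (f₃ : τ 3) :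
    mk4 f₀ f₁ f₂ f₃ 0 = f₀ := rfl
@[simp] lemma mk4_one {τ : Fin 4 → Type} (f₀ : τ 0) (f₁ : τ 1) (f₂ : τ 2) (f₃ : τ 3) :
    mk4 f₀ f₁ f₂ f₃ 1 = f₁ := rfl
@[simp] lemma mk4_two {τ : Fin 4 → Type} (f₀ : τ 0) (f₁ : τ 1) (f₂ : τ 2) (f₃ : τ 3) :
    mk4 f₀ f₁ f₂ f₃ 2 = f₂ := rfl
@[simp] lemma mk4_three {τ : Fin 4 → Type} (f₀ : τ 0) (f₁ : τ 1) (f₂ : τ 2) (f₃ : τ 3) :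
    mk4 f₀ f₁ f₂ f₃ 3 = f₃ := rfl

@[simp] lemma delta_self {α : Type} [DecidableEq α] (a : α) : delta a a = 1 := by simp [delta]
lemma delta_of_ne {α : Type} [DecidableEq α] {a b : α} (h : a ≠ b) : delta a b = 0 := by
  simp [delta, h]
lemma delta_comm {α : Type} [DecidableEq α] (a b : α) : delta a b = delta b a := by
  simp [delta, eq_comm]
lemma delta_prod {α β : Type} [DecidableEq α] [DecidableEq β] (a₁ a₂ : α) (b₁ b₂ : β) :
    delta (a₁, b₁) (a₂, b₂) = delta a₁ a₂ * delta b₁ b₂ := by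
  simp only [delta, Prod.ext_iff, ite_and]
  split_ifs <;> ring

lemma sum_delta {α : Type} [Fintype α] [DecidableEq α] (a : α) : ∑ x, delta x a = 1 := by
  simp [delta]
lemma sum_delta_mul {α : Type} [Fintype α] [DecidableEq α] (a : α) (f : α → ℂ) :
    ∑ x, delta x a * f x = f a := by
  simp [delta, ite_mul]
lemma sum_delta_delta {α : Type} [Fintype α] [DecidableEq α] (a b : α) :
    ∑ x, delta x a * delta x b = delta a b := by
  rw [sum_delta_mul a (fun x => delta x b), delta_comm]

/-- Evaluation of `dsum` on an all-left coordinate. -/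
lemma dsum_apply_inl {k : ℕ} {ι κ : Fin k → Type} (hk : k ≠ 0) (T : Tensor ι) (S : Tensor κ)
    (y : ∀ i, ι i) : dsum T S (fun i => Sum.inl (y i)) = T y := by
  unfold dsum
  have h₁ : ∃ y' : ∀ i, ι i,
      (fun i => (Sum.inl (y i) : ι i ⊕ κ i)) = fun i => Sum.inl (y' i) := ⟨y, rfl⟩
  rw [dif_pos h₁, dif_neg, add_zero]
  · have hy : h₁.choose = y := by
      funext i
      have := congrFun h₁.choose_spec i
      exact (Sum.inl_injective this).symm
    rw [hy]
  · rintro ⟨z, hz⟩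
    have := congrFun hz ⟨0, Nat.pos_of_ne_zero hk⟩
    simp at this

/-- Evaluation of `dsum` on an all-right coordinate. -/
lemma dsum_apply_inr {k : ℕ} {ι κ : Fin k → Type} (hk : k ≠ 0) (T : Tensor ι) (S : Tensor κ)
    (z : ∀ i, κ i) : dsum T S (fun i => Sum.inr (z i)) = S z := by
  unfold dsum
  have h₁ : ∃ z' : ∀ i, κ i,
      (fun i => (Sum.inr (z i) : ι i ⊕ κ i)) = fun i => Sum.inr (z' i) := ⟨z, rfl⟩
  rw [dif_pos h₁, dif_neg, zero_add]
  · have hz' : h₁.choose = z := by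
      funext i
      have := congrFun h₁.choose_spec i
      exact (Sum.inr_injective this).symm
    rw [hz']
  · rintro ⟨y, hy⟩
    have := congrFun hy ⟨0, Nat.pos_of_ne_zero hk⟩
    simp at this

/-- `dsum` vanishes on mixed coordinates. -/
lemma dsum_apply_mixed {k : ℕ} {ι κ : Fin k → Type} (T : Tensor ι) (S : Tensor κ)
    (x : ∀ i, ι i ⊕ κ i) {i₀ i₁ : Fin k} (h₀ : (x i₀).isLeft) (h₁ : (x i₁).isRight) :
    dsum T S x = 0 := by
  unfold dsum
  rw [dif_neg, dif_neg, add_zero]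
  · rintro ⟨z, hz⟩
    rw [congrFun hz i₀] at h₀
    simp at h₀
  · rintro ⟨y, hy⟩
    rw [congrFun hy i₁] at h₁
    simp at h₁

/-- Rank bound from a decomposition indexed by an arbitrary finite type. -/
lemma hasRankLE_of_fintype {k : ℕ} {ι : Fin k → Type} (T : Tensor ι) (J : Type) [Fintype J]
    (v : J → ∀ i, ι i → ℂ) (hT : T = fun x => ∑ j : J, ∏ i, v j i (x i)) :
    HasRankLE T (Fintype.card J) := by
  refine ⟨fun t => v ((Fintype.equivFin J).symm t), ?_⟩
  rw [hT]; funext x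
  exact (Equiv.sum_comp (Fintype.equivFin J).symm fun j => ∏ i, v j i (x i)).symm

lemma det_eq_zero_of_rankfactor {β : Type} [Fintype β] [DecidableEq β] {r : ℕ}
    (hr : r < Fintype.card β) (A : Matrix β (Fin r) ℂ) (B : Matrix (Fin r) β ℂ) :
    (A * B).det = 0 := by
  by_contra h
  have hu : IsUnit (A * B) := (Matrix.isUnit_iff_isUnit_det _).mpr (isUnit_iff_ne_zero.mpr h)
  have h1 : (A * B).rank = Fintype.card β := Matrix.rank_of_isUnit _ hu
  have h2 : (A * B).rank ≤ r := by
    refine le_trans (Matrix.rank_mul_le_right A B) ?_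
    simpa using Matrix.rank_le_card_height B
  omega

end AuxGeneral

section LowerBounds

lemma sum_delta3_mul {m₁ m₂ m₃ : ℕ} (a : Fin m₁) (b : Fin m₂) (c : Fin m₃)
    (g : Fin m₁ × Fin m₂ × Fin m₃ → ℂ) :
    ∑ p : Fin m₁ × Fin m₂ × Fin m₃, delta p.1 a * delta p.2.1 b * delta p.2.2 c * g p
      = g (a, b, c) := by
  rw [Fintype.sum_prod_type]
  have h1 : ∀ i : Fin m₁, ∑ jk : Fin m₂ × Fin m₃,
      delta i a * delta jk.1 b * delta jk.2 c * g (i, jk)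
      = delta i a * ∑ jk : Fin m₂ × Fin m₃, delta jk.1 b * delta jk.2 c * g (i, jk) := by
    intro i; rw [Finset.mul_sum]; exact Finset.sum_congr rfl fun jk _ => by ring
  simp only [h1]
  rw [sum_delta_mul a]
  rw [Fintype.sum_prod_type]
  have h2 : ∀ j : Fin m₂, ∑ k : Fin m₃, delta j b * delta k c * g (a, j, k)
      = delta j b * ∑ k : Fin m₃, delta k c * g (a, j, k) := by
    intro j; rw [Finset.mul_sum]; exact Finset.sum_congr rfl fun k _ => by ring
  simp only [h2]
  rw [sum_delta_mul b, sum_delta_mul c]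

lemma spider3_hasRankLE (m₁ m₂ m₃ : ℕ) : HasRankLE (spider3 m₁ m₂ m₃) (m₁ * m₂ * m₃) := by
  have h := hasRankLE_of_fintype (spider3 m₁ m₂ m₃) (Fin m₁ × Fin m₂ × Fin m₃)
    (fun p => mk4 (τ := fun i => ![Fin m₁, Fin m₂, Fin m₃, Fin m₁ × Fin m₂ × Fin m₃] i → ℂ)
      (fun t => delta p.1 t) (fun t => delta p.2.1 t) (fun t => delta p.2.2 t)
      (fun t => delta p t)) ?_
  · simpa [mul_assoc] using h
  · funext x
    have : ∀ p : Fin m₁ × Fin m₂ × Fin m₃,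
        (∏ i, mk4 (τ := fun i => ![Fin m₁, Fin m₂, Fin m₃, Fin m₁ × Fin m₂ × Fin m₃] i → ℂ)
          (fun t => delta p.1 t) (fun t => delta p.2.1 t) (fun t => delta p.2.2 t)
          (fun t => delta p t) i (x i))
        = delta p.1 (x 0) * delta p.2.1 (x 1) * delta p.2.2 (x 2) * delta p (x 3) := by
      intro p
      rw [Fin.prod_univ_four]
      simp only [mk4_zero, mk4_one, mk4_two, mk4_three]
    simp only [this]
    rw [sum_delta3_mul (x 0) (x 1) (x 2) (fun p => delta p (x 3))]
    simp only [spider3]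
    exact delta_comm _ _

lemma matTensor4_hasRankLE (N : ℕ) : HasRankLE (matTensor4 N) N := by
  have h := hasRankLE_of_fintype (matTensor4 N) (Fin N)
    (fun t => mk4 (τ := fun i => ![Fin N, Fin N, Fin 1, Fin 1] i → ℂ)
      (fun a => delta t a) (fun a => delta t a) (fun _ => 1) (fun _ => 1)) ?_
  · simpa using h
  · funext x
    have : ∀ t : Fin N,
        (∏ i, mk4 (τ := fun i => ![Fin N, Fin N, Fin 1, Fin 1] i → ℂ)
          (fun a => delta t a) (fun a => delta t a) (fun _ => (1:ℂ)) (fun _ => 1) i (x i))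
        = delta t (x 0) * delta t (x 1) := by
      intro t
      rw [Fin.prod_univ_four]
      simp only [mk4_zero, mk4_one, mk4_two, mk4_three, mul_one]
    simp only [this]
    exact (sum_delta_delta (α := Fin N) (x 0) (x 1)).symm

lemma spider3_borderRank_lb (m₁ m₂ m₃ r : ℕ)
    (h : HasBorderRankLE (spider3 m₁ m₂ m₃) r) : m₁ * m₂ * m₃ ≤ r := by
  by_contra hlt
  push_neg at hlt
  have hcard : r < Fintype.card (Fin m₁ × Fin m₂ × Fin m₃) := by
    simpa [mul_assoc] using hlt
  set Φ : Tensor ![Fin m₁, Fin m₂, Fin m₃, Fin m₁ × Fin m₂ × Fin m₃] →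
      Matrix (Fin m₁ × Fin m₂ × Fin m₃) (Fin m₁ × Fin m₂ × Fin m₃) ℂ :=
    fun T => Matrix.of fun d e => T (mk4 e.1 e.2.1 e.2.2 d) with hΦ
  have hc : Continuous fun T => (Φ T).det :=
    Continuous.matrix_det (continuous_matrix fun d e => continuous_apply _)
  have hzero : ∀ S ∈ {S : Tensor ![Fin m₁, Fin m₂, Fin m₃, Fin m₁ × Fin m₂ × Fin m₃] |
      HasRankLE S r}, (Φ S).det = 0 := by
    rintro S ⟨v, rfl⟩
    have hfac : Φ (fun x => ∑ j : Fin r, ∏ i, v j i (x i)) =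
        (Matrix.of fun d t => v t 3 d) *
          (Matrix.of fun t e => v t 0 e.1 * v t 1 e.2.1 * v t 2 e.2.2) := by
      ext d e
      simp only [hΦ, Matrix.mul_apply, Matrix.of_apply]
      refine Finset.sum_congr rfl fun t _ => ?_
      rw [Fin.prod_univ_four]
      exact mul_comm _ _
    rw [hfac]
    exact det_eq_zero_of_rankfactor hcard _ _
  have hmem : (Φ (spider3 m₁ m₂ m₃)).det = 0 := by
    have hcl : IsClosed ((fun T => (Φ T).det) ⁻¹' {0}) := isClosed_singleton.preimage hc
    exact hcl.closure_subset_iff.mpr (fun S hS => hzero S hS) h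
  have hone : Φ (spider3 m₁ m₂ m₃) = 1 := by
    ext d e
    simp only [hΦ, Matrix.of_apply, spider3, mk4_zero, mk4_one, mk4_two, mk4_three]
    change delta d e = (1 : Matrix (Fin m₁ × Fin m₂ × Fin m₃) (Fin m₁ × Fin m₂ × Fin m₃) ℂ) d e
    simp [delta, Matrix.one_apply]
  rw [hone, Matrix.det_one] at hmem
  exact one_ne_zero hmem

lemma matTensor4_borderRank_lb (N r : ℕ)
    (h : HasBorderRankLE (matTensor4 N) r) : N ≤ r := by
  by_contra hlt
  push_neg at hlt
  have hcard : r < Fintype.card (Fin N) := by simpa using hlt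
  set Φ : Tensor ![Fin N, Fin N, Fin 1, Fin 1] → Matrix (Fin N) (Fin N) ℂ :=
    fun T => Matrix.of fun a b => T (mk4 a b (0 : Fin 1) (0 : Fin 1)) with hΦ
  have hc : Continuous fun T => (Φ T).det :=
    Continuous.matrix_det (continuous_matrix fun d e => continuous_apply _)
  have hzero : ∀ S ∈ {S : Tensor ![Fin N, Fin N, Fin 1, Fin 1] | HasRankLE S r},
      (Φ S).det = 0 := by
    rintro S ⟨v, rfl⟩
    have hfac : Φ (fun x => ∑ j : Fin r, ∏ i, v j i (x i)) =
        (Matrix.of fun a t => v t 0 a) *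
          (Matrix.of fun t b => v t 1 b * v t 2 (0 : Fin 1) * v t 3 (0 : Fin 1)) := by
      ext a b
      simp only [hΦ, Matrix.mul_apply, Matrix.of_apply]
      refine Finset.sum_congr rfl fun t _ => ?_
      rw [Fin.prod_univ_four]
      change v t 0 a * v t 1 b * v t 2 (0 : Fin 1) * v t 3 (0 : Fin 1)
        = v t 0 a * (v t 1 b * v t 2 (0 : Fin 1) * v t 3 (0 : Fin 1))
      ring
    rw [hfac]
    exact det_eq_zero_of_rankfactor hcard _ _
  have hmem : (Φ (matTensor4 N)).det = 0 := by
    have hcl : IsClosed ((fun T => (Φ T).det) ⁻¹' {0}) := isClosed_singleton.preimage hc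
    exact hcl.closure_subset_iff.mpr (fun S hS => hzero S hS) h
  have hone : Φ (matTensor4 N) = 1 := by
    ext a b
    simp only [hΦ, Matrix.of_apply, matTensor4, Matrix.one_apply, mk4_zero, mk4_one, delta]
    rfl
  rw [hone, Matrix.det_one] at hmem
  exact one_ne_zero hmem

lemma le_borderRank_spider3 (m₁ m₂ m₃ : ℕ) :
    m₁ * m₂ * m₃ ≤ borderRank (spider3 m₁ m₂ m₃) := by
  have hne : {r | HasBorderRankLE (spider3 m₁ m₂ m₃) r}.Nonempty :=
    ⟨m₁ * m₂ * m₃, subset_closure (spider3_hasRankLE m₁ m₂ m₃)⟩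
  exact spider3_borderRank_lb _ _ _ _ (Nat.sInf_mem hne)

lemma le_borderRank_matTensor4 (N : ℕ) : N ≤ borderRank (matTensor4 N) := by
  have hne : {r | HasBorderRankLE (matTensor4 N) r}.Nonempty :=
    ⟨N, subset_closure (matTensor4_hasRankLE N)⟩
  exact matTensor4_borderRank_lb _ _ (Nat.sInf_mem hne)

end LowerBounds

section Cons
variable (q e₂ e₃ : ℕ)

def iP (p : Fin q) : Fin (2*q+2) := ⟨p.1+1, by have := p.2; omega⟩
def iM (p : Fin q) : Fin (2*q+2) := ⟨2*q-p.1, by have := p.2; omega⟩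
def jE (β : Fin e₂) : Fin (e₂+2) := ⟨β.1+1, by have := β.2; omega⟩
def kE (γ : Fin e₃) : Fin (e₃+2) := ⟨γ.1+1, by have := γ.2; omega⟩
def jT : Fin (e₂+2) := ⟨e₂+1, by omega⟩
def kT : Fin (e₃+2) := ⟨e₃+1, by omega⟩

variable {q e₂ e₃}

def chi (p : Fin q) (i : Fin (2*q+2)) : ℂ := delta i (iP q p) + delta i (iM q p) - 2 * delta i 0
def psi (p : Fin q) (i : Fin (2*q+2)) : ℂ := delta i (iP q p) - delta i (iM q p)
def pii (p : Fin q) (i : Fin (2*q+2)) : ℂ := delta i (iP q p) + delta i (iM q p)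
def sgn (i : Fin (2*q+2)) : ℂ :=
  (if 1 ≤ i.1 ∧ i.1 ≤ q then 1 else 0) - (if q+1 ≤ i.1 ∧ i.1 ≤ 2*q then 1 else 0)
def iot (i : Fin (2*q+2)) : ℂ := if 1 ≤ i.1 ∧ i.1 ≤ 2*q then 1 else 0
def ind₂ (j : Fin (e₂+2)) : ℂ := if 1 ≤ j.1 ∧ j.1 ≤ e₂ then 1 else 0
def ind₃ (k : Fin (e₃+2)) : ℂ := if 1 ≤ k.1 ∧ k.1 ≤ e₃ then 1 else 0

lemma sum_delta_mul' {α : Type} [Fintype α] [DecidableEq α] (a : α) (f : α → ℂ) :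
    ∑ x, f x * delta x a = f a := by
  simp [delta, mul_ite]

-- evaluation lemmas
lemma sgn_iP (p : Fin q) : sgn (iP q p) = 1 := by
  have := p.2; have h : (iP q p).1 = p.1+1 := rfl; simp only [sgn]; rw [if_pos (by omega), if_neg (by omega)]; ring
lemma sgn_iM (p : Fin q) : sgn (iM q p) = -1 := by
  have := p.2; have h : (iM q p).1 = 2*q-p.1 := rfl; simp only [sgn]; rw [if_neg (by omega), if_pos (by omega)]; ring
lemma sgn_zero : sgn (0 : Fin (2*q+2)) = 0 := by
  simp only [sgn]; rw [if_neg (by simp), if_neg (by simp)]; ring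
lemma iot_iP (p : Fin q) : iot (iP q p) = 1 := by
  have := p.2; have h : (iP q p).1 = p.1+1 := rfl; simp only [iot]; rw [if_pos (by omega)]
lemma iot_iM (p : Fin q) : iot (iM q p) = 1 := by
  have := p.2; have h : (iM q p).1 = 2*q-p.1 := rfl; simp only [iot]; rw [if_pos (by omega)]

lemma iP_ne_iM (p p' : Fin q) : iP q p ≠ iM q p' := by
  have := p.2; have := p'.2
  simp only [iP, iM, Ne, Fin.mk.injEq]; omega
lemma iP_inj (p p' : Fin q) : delta (iP q p) (iP q p') = delta p p' := by
  simp only [delta, iP, Fin.mk.injEq]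
  congr 1
  simp [Fin.ext_iff]
lemma iM_inj (p p' : Fin q) : delta (iM q p) (iM q p') = delta p p' := by
  have := p.2; have := p'.2
  simp only [delta, iM, Fin.mk.injEq]
  congr 1
  simp only [Fin.ext_iff, eq_iff_iff]
  omega
lemma iP_ne_zero (p : Fin q) : iP q p ≠ 0 := by
  simp only [iP, Ne, Fin.ext_iff, Fin.val_zero]; omega
lemma iM_ne_zero (p : Fin q) : iM q p ≠ 0 := by
  have := p.2; simp only [iM, Ne, Fin.ext_iff, Fin.val_zero]; omega

-- the index-sum lemmas
lemma sum_chi (p : Fin q) : ∑ i : Fin (2*q+2), chi p i = 0 := by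
  simp only [chi]
  rw [Finset.sum_sub_distrib, Finset.sum_add_distrib, ← Finset.mul_sum]
  rw [sum_delta, sum_delta, sum_delta]; ring

lemma sum_chi_mul (p : Fin q) (f : Fin (2*q+2) → ℂ) :
    ∑ i : Fin (2*q+2), chi p i * f i = f (iP q p) + f (iM q p) - 2 * f 0 := by
  simp only [chi]
  have : ∀ i, (delta i (iP q p) + delta i (iM q p) - 2 * delta i 0) * f i
      = delta i (iP q p) * f i + delta i (iM q p) * f i - 2 * (delta i 0 * f i) := by
    intro i; ring
  simp only [this]
  rw [Finset.sum_sub_distrib, Finset.sum_add_distrib, ← Finset.mul_sum]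
  rw [sum_delta_mul, sum_delta_mul, sum_delta_mul]

lemma psi_iP (p p' : Fin q) : psi p (iP q p') = delta p' p := by
  simp only [psi]
  rw [iP_inj, delta_of_ne (iP_ne_iM p' p)]; ring
lemma psi_iM (p p' : Fin q) : psi p (iM q p') = -delta p' p := by
  simp only [psi]
  rw [iM_inj, delta_of_ne (Ne.symm (iP_ne_iM p p')), delta_comm]; ring
lemma psi_zero (p : Fin q) : psi p (0 : Fin (2*q+2)) = 0 := by
  simp only [psi]
  rw [delta_of_ne (Ne.symm (iP_ne_zero p)), delta_of_ne (Ne.symm (iM_ne_zero p))]; ring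
lemma pii_iP (p p' : Fin q) : pii p (iP q p') = delta p' p := by
  simp only [pii]
  rw [iP_inj, delta_of_ne (iP_ne_iM p' p)]; ring
lemma pii_iM (p p' : Fin q) : pii p (iM q p') = delta p' p := by
  simp only [pii]
  rw [iM_inj, delta_of_ne (Ne.symm (iP_ne_iM p p')), delta_comm]; ring

lemma sum_chi_psi (p₁ p₂ : Fin q) : ∑ i : Fin (2*q+2), chi p₁ i * psi p₂ i = 0 := by
  rw [sum_chi_mul p₁ (psi p₂)]
  rw [psi_iP, psi_iM, psi_zero]; ring
lemma sum_chi_sgn (p₁ : Fin q) : ∑ i : Fin (2*q+2), chi p₁ i * sgn i = 0 := by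
  rw [sum_chi_mul p₁ sgn, sgn_iP, sgn_iM, sgn_zero]; ring
lemma sum_chi_psi_sgn (p₁ p₂ : Fin q) :
    ∑ i : Fin (2*q+2), chi p₁ i * (psi p₂ i * sgn i) = 2 * delta p₁ p₂ := by
  rw [sum_chi_mul p₁ (fun i => psi p₂ i * sgn i)]
  rw [psi_iP, psi_iM, psi_zero, sgn_iP, sgn_iM, delta_comm]; ring
lemma psi_sgn_eq_pii_iot (p : Fin q) (i : Fin (2*q+2)) : psi p i * sgn i = pii p i * iot i := by
  rcases eq_or_ne i (iP q p) with rfl | h1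
  · rw [psi_iP, pii_iP, sgn_iP, iot_iP]
  rcases eq_or_ne i (iM q p) with rfl | h2
  · rw [psi_iM, pii_iM, sgn_iM, iot_iM]; ring
  have hp : delta i (iP q p) = 0 := delta_of_ne h1
  have hm : delta i (iM q p) = 0 := delta_of_ne h2
  simp only [psi, pii, hp, hm]; ring

lemma sum_ind₃ : ∑ k : Fin (e₃+2), ind₃ k = (e₃ : ℂ) := by
  simp only [ind₃]
  rw [Fin.sum_univ_eq_sum_range (fun v => if 1 ≤ v ∧ v ≤ e₃ then (1:ℂ) else 0)]
  rw [Finset.sum_boole]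
  have : (Finset.range (e₃+2)).filter (fun v => 1 ≤ v ∧ v ≤ e₃) = Finset.Ico 1 (e₃+1) := by
    ext v; simp [Finset.mem_Ico]; omega
  rw [this, Nat.card_Ico]
  norm_num

lemma jE_ne_zero (β : Fin e₂) : jE e₂ β ≠ 0 := by
  simp only [jE, Ne, Fin.ext_iff, Fin.val_zero]; omega
lemma kE_ne_zero (γ : Fin e₃) : kE e₃ γ ≠ 0 := by
  simp only [kE, Ne, Fin.ext_iff, Fin.val_zero]; omega
lemma jE_ne_jT (β : Fin e₂) : jE e₂ β ≠ jT e₂ := by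
  have := β.2; simp only [jE, jT, Ne, Fin.mk.injEq]; omega
lemma kE_ne_kT (γ : Fin e₃) : kE e₃ γ ≠ kT e₃ := by
  have := γ.2; simp only [kE, kT, Ne, Fin.mk.injEq]; omega
lemma jE_inj (β β' : Fin e₂) : delta (jE e₂ β) (jE e₂ β') = delta β β' := by
  simp only [delta, jE, Fin.mk.injEq]; congr 1; simp [Fin.ext_iff]
lemma kE_inj (γ γ' : Fin e₃) : delta (kE e₃ γ) (kE e₃ γ') = delta γ γ' := by
  simp only [delta, kE, Fin.mk.injEq]; congr 1; simp [Fin.ext_iff]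
lemma ind₂_jE (β : Fin e₂) : ind₂ (jE e₂ β) = 1 := by
  have := β.2; have h : (jE e₂ β).1 = β.1+1 := rfl; simp only [ind₂]; rw [if_pos (by omega)]
lemma ind₃_kE (γ : Fin e₃) : ind₃ (kE e₃ γ) = 1 := by
  have := γ.2; have h : (kE e₃ γ).1 = γ.1+1 := rfl; simp only [ind₃]; rw [if_pos (by omega)]
lemma ind₂_zero : ind₂ (0 : Fin (e₂+2)) = 0 := by
  simp only [ind₂]; rw [if_neg (by simp)]
lemma ind₂_jT : ind₂ (jT e₂) = 0 := by
  have h : (jT e₂).1 = e₂+1 := rfl; simp only [ind₂]; rw [if_neg (by omega)]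
lemma ind₃_zero : ind₃ (0 : Fin (e₃+2)) = 0 := by
  simp only [ind₃]; rw [if_neg (by simp)]

variable (q e₂ e₃)

def eL : (Fin q × Fin e₂ × Fin e₃) ≃ Fin (q*e₂*e₃) :=
  Fintype.equivFinOfCardEq (by simp [mul_assoc])

def Xc (ijk : Fin (2*q+2) × Fin (e₂+2) × Fin (e₃+2)) (t : Fin (q*e₂*e₃)) : ℂ :=
  chi ((eL q e₂ e₃).symm t).1 ijk.1 * delta ijk.2.1 (jE e₂ ((eL q e₂ e₃).symm t).2.1)
    * delta ijk.2.2 (kE e₃ ((eL q e₂ e₃).symm t).2.2)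

def Yc (ijk : Fin (2*q+2) × Fin (e₂+2) × Fin (e₃+2)) (t : Fin (q*e₂*e₃)) : ℂ :=
  psi ((eL q e₂ e₃).symm t).1 ijk.1
    * (delta ijk.2.1 (jE e₂ ((eL q e₂ e₃).symm t).2.1) - delta ijk.2.1 0)
    * delta ijk.2.2 (kE e₃ ((eL q e₂ e₃).symm t).2.2)
  + pii ((eL q e₂ e₃).symm t).1 ijk.1
    * (-(1/2) * delta ijk.2.1 0 + (1/2) * delta ijk.2.1 (jT e₂))
    * delta ijk.2.2 0

def Zc (ijk : Fin (2*q+2) × Fin (e₂+2) × Fin (e₃+2)) : ℂ :=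
  sgn ijk.1 * ind₂ ijk.2.1 * (1/2) * (ind₃ ijk.2.2 - (e₃:ℂ) * delta ijk.2.2 0)
  + iot ijk.1 * delta ijk.2.1 0 * (delta ijk.2.2 0 - delta ijk.2.2 (kT e₃))

variable {q e₂ e₃}

lemma sum_Yc (i : Fin (2*q+2)) (k : Fin (e₃+2)) (t : Fin (q*e₂*e₃)) :
    ∑ j : Fin (e₂+2), Yc q e₂ e₃ (i, j, k) t = 0 := by
  simp only [Yc]
  rw [Finset.sum_add_distrib]
  have h1 : ∀ j : Fin (e₂+2),
      psi ((eL q e₂ e₃).symm t).1 i * (delta j (jE e₂ ((eL q e₂ e₃).symm t).2.1) - delta j 0)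
        * delta k (kE e₃ ((eL q e₂ e₃).symm t).2.2)
      = (psi ((eL q e₂ e₃).symm t).1 i * delta k (kE e₃ ((eL q e₂ e₃).symm t).2.2))
        * (delta j (jE e₂ ((eL q e₂ e₃).symm t).2.1) - delta j 0) := by intro j; ring
  have h2 : ∀ j : Fin (e₂+2),
      pii ((eL q e₂ e₃).symm t).1 i * (-(1/2) * delta j 0 + (1/2) * delta j (jT e₂)) * delta k 0
      = (pii ((eL q e₂ e₃).symm t).1 i * delta k 0)
        * (-(1/2) * delta j 0 + (1/2) * delta j (jT e₂)) := by intro j; ring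
  simp only [h1, h2]
  rw [← Finset.mul_sum, ← Finset.mul_sum]
  rw [Finset.sum_sub_distrib, Finset.sum_add_distrib]
  rw [sum_delta, sum_delta, ← Finset.mul_sum, ← Finset.mul_sum, sum_delta, sum_delta]
  ring

lemma sum_Zc (i : Fin (2*q+2)) (j : Fin (e₂+2)) :
    ∑ k : Fin (e₃+2), Zc q e₂ e₃ (i, j, k) = 0 := by
  simp only [Zc]
  rw [Finset.sum_add_distrib]
  have h1 : ∀ k : Fin (e₃+2),
      sgn i * ind₂ j * (1/2) * (ind₃ k - (e₃:ℂ) * delta k 0)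
      = (sgn i * ind₂ j * (1/2)) * (ind₃ k - (e₃:ℂ) * delta k 0) := by intro k; ring
  have h2 : ∀ k : Fin (e₃+2),
      iot i * delta j 0 * (delta k 0 - delta k (kT e₃))
      = (iot i * delta j 0) * (delta k 0 - delta k (kT e₃)) := by intro k; ring
  rw [← Finset.mul_sum, ← Finset.mul_sum]
  rw [Finset.sum_sub_distrib, Finset.sum_sub_distrib, ← Finset.mul_sum]
  rw [sum_ind₃, sum_delta, sum_delta]
  ring

end Cons

section Construction

variable (q e₂ e₃ : ℕ)

@[simp] lemma delta_jE_zero (β : Fin e₂) : delta (jE e₂ β) 0 = 0 := delta_of_ne (jE_ne_zero β)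
@[simp] lemma delta_jE_jT (β : Fin e₂) : delta (jE e₂ β) (jT e₂) = 0 := delta_of_ne (jE_ne_jT β)
@[simp] lemma delta_kE_zero (γ : Fin e₃) : delta (kE e₃ γ) 0 = 0 := delta_of_ne (kE_ne_zero γ)
@[simp] lemma delta_kE_kT (γ : Fin e₃) : delta (kE e₃ γ) (kT e₃) = 0 := delta_of_ne (kE_ne_kT γ)
@[simp] lemma delta_zero_kT : delta (0 : Fin (e₃+2)) (kT e₃) = 0 := by
  apply delta_of_ne; simp only [kT, Ne, Fin.ext_iff, Fin.val_zero]; omega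
@[simp] lemma delta_jT_zero : delta (jT e₂) (0 : Fin (e₂+2)) = 0 := by
  apply delta_of_ne; simp only [jT, Ne, Fin.ext_iff, Fin.val_zero]; omega

lemma delta_eL_symm (s₁ s₂ : Fin (q*e₂*e₃)) :
    delta ((eL q e₂ e₃).symm s₁) ((eL q e₂ e₃).symm s₂) = delta s₁ s₂ := by
  simp [delta, EmbeddingLike.apply_eq_iff_eq]

def cio : Fin 4 → Type := fun i =>
  ![Fin (2*q+2), Fin (e₂+2), Fin (e₃+2), Fin (2*q+2) × Fin (e₂+2) × Fin (e₃+2)] i ⊕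
    ![Fin (q*e₂*e₃), Fin (q*e₂*e₃), Fin 1, Fin 1] i

attribute [reducible] cio

def vfam (ε : ℂ) (o : Option (Fin (2*q+2) × Fin (e₂+2) × Fin (e₃+2))) :
    ∀ i, cio q e₂ e₃ i → ℂ :=
  match o with
  | none => mk4 (τ := fun i => cio q e₂ e₃ i → ℂ)
      (Sum.elim (fun _ => -1) (fun _ => 0))
      (Sum.elim (fun _ => 1) (fun _ => 0))
      (Sum.elim (fun _ => 1) (fun _ => 0))
      (Sum.elim (fun _ => 0) (fun _ => (ε⁻¹)^3))
  | some p => mk4 (τ := fun i => cio q e₂ e₃ i → ℂ)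
      (Sum.elim (fun t => delta p.1 t) (fun t => ε * Xc q e₂ e₃ p t))
      (Sum.elim (fun t => delta p.2.1 t) (fun t => ε * Yc q e₂ e₃ p t))
      (Sum.elim (fun t => delta p.2.2 t) (fun _ => ε * Zc q e₂ e₃ p))
      (Sum.elim (fun d => delta p d) (fun _ => (ε⁻¹)^3))

def Tfam (ε : ℂ) : Tensor (cio q e₂ e₃) :=
  fun x => ∑ o : Option (Fin (2*q+2) × Fin (e₂+2) × Fin (e₃+2)), ∏ i, vfam q e₂ e₃ ε o i (x i)

lemma Tfam_hasRankLE (ε : ℂ) : HasRankLE (Tfam q e₂ e₃ ε) ((2*q+2)*(e₂+2)*(e₃+2) + 1) := by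
  have h := hasRankLE_of_fintype (Tfam q e₂ e₃ ε) _ (vfam q e₂ e₃ ε) rfl
  simpa [mul_assoc] using h

lemma sum_triple {m₁ m₂ m₃ : ℕ} (F : Fin m₁ × Fin m₂ × Fin m₃ → ℂ) :
    ∑ p : Fin m₁ × Fin m₂ × Fin m₃, F p = ∑ i, ∑ j, ∑ k, F (i, j, k) := by
  rw [Fintype.sum_prod_type]
  exact Finset.sum_congr rfl fun i _ => Fintype.sum_prod_type _

variable {q e₂ e₃}

lemma bsum2 (s₁ : Fin (q*e₂*e₃)) (t₂ : Fin (e₂+2)) (t₃ : Fin (e₃+2)) :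
    ∑ i : Fin (2*q+2), Xc q e₂ e₃ (i, t₂, t₃) s₁ = 0 := by
  simp only [Xc]
  rw [← Finset.sum_mul, ← Finset.sum_mul, sum_chi, zero_mul, zero_mul]

lemma Zc_eval_kE (i : Fin (2*q+2)) (j : Fin (e₂+2)) (γ : Fin e₃) :
    Zc q e₂ e₃ (i, j, kE e₃ γ) = sgn i * ind₂ j * (1/2) := by
  simp only [Zc, ind₃_kE, delta_kE_zero, delta_kE_kT]
  ring

lemma Zc_eval_zero (i : Fin (2*q+2)) (j : Fin (e₂+2)) :
    Zc q e₂ e₃ (i, j, 0) = -(e₃:ℂ)/2 * (sgn i * ind₂ j) + iot i * delta j 0 := by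
  simp only [Zc, ind₃_zero, delta_self, delta_zero_kT]
  ring

lemma bsum5 (s₁ s₂ : Fin (q*e₂*e₃)) (t₃ : Fin (e₃+2)) :
    ∑ i : Fin (2*q+2), ∑ j : Fin (e₂+2),
      Xc q e₂ e₃ (i, j, t₃) s₁ * Yc q e₂ e₃ (i, j, t₃) s₂ = 0 := by
  simp only [Xc, Yc]
  have hre : ∀ (i : Fin (2*q+2)) (j : Fin (e₂+2)),
      chi ((eL q e₂ e₃).symm s₁).1 i * delta j (jE e₂ ((eL q e₂ e₃).symm s₁).2.1)
        * delta t₃ (kE e₃ ((eL q e₂ e₃).symm s₁).2.2) *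
      (psi ((eL q e₂ e₃).symm s₂).1 i
          * (delta j (jE e₂ ((eL q e₂ e₃).symm s₂).2.1) - delta j 0)
          * delta t₃ (kE e₃ ((eL q e₂ e₃).symm s₂).2.2)
        + pii ((eL q e₂ e₃).symm s₂).1 i
          * (-(1/2) * delta j 0 + (1/2) * delta j (jT e₂)) * delta t₃ 0)
      = delta j (jE e₂ ((eL q e₂ e₃).symm s₁).2.1) *
          (chi ((eL q e₂ e₃).symm s₁).1 i
            * delta t₃ (kE e₃ ((eL q e₂ e₃).symm s₁).2.2) *
          (psi ((eL q e₂ e₃).symm s₂).1 i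
              * (delta j (jE e₂ ((eL q e₂ e₃).symm s₂).2.1) - delta j 0)
              * delta t₃ (kE e₃ ((eL q e₂ e₃).symm s₂).2.2)
            + pii ((eL q e₂ e₃).symm s₂).1 i
              * (-(1/2) * delta j 0 + (1/2) * delta j (jT e₂)) * delta t₃ 0)) := by
    intro i j; ring
  simp only [hre, sum_delta_mul, jE_inj, delta_jE_zero, delta_jE_jT]
  have hre2 : ∀ i : Fin (2*q+2),
      chi ((eL q e₂ e₃).symm s₁).1 i * delta t₃ (kE e₃ ((eL q e₂ e₃).symm s₁).2.2) *
        (psi ((eL q e₂ e₃).symm s₂).1 i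
            * (delta ((eL q e₂ e₃).symm s₁).2.1 ((eL q e₂ e₃).symm s₂).2.1 - 0)
            * delta t₃ (kE e₃ ((eL q e₂ e₃).symm s₂).2.2)
          + pii ((eL q e₂ e₃).symm s₂).1 i * (-(1/2) * 0 + (1/2) * 0) * delta t₃ 0)
      = chi ((eL q e₂ e₃).symm s₁).1 i * psi ((eL q e₂ e₃).symm s₂).1 i *
          (delta t₃ (kE e₃ ((eL q e₂ e₃).symm s₁).2.2)
            * delta ((eL q e₂ e₃).symm s₁).2.1 ((eL q e₂ e₃).symm s₂).2.1
            * delta t₃ (kE e₃ ((eL q e₂ e₃).symm s₂).2.2)) := by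
    intro i; ring
  simp only [hre2]
  rw [← Finset.sum_mul, sum_chi_psi, zero_mul]

lemma bsum6 (s₁ : Fin (q*e₂*e₃)) (t₂ : Fin (e₂+2)) :
    ∑ i : Fin (2*q+2), ∑ k : Fin (e₃+2),
      Xc q e₂ e₃ (i, t₂, k) s₁ * Zc q e₂ e₃ (i, t₂, k) = 0 := by
  simp only [Xc]
  have hre : ∀ (i : Fin (2*q+2)) (k : Fin (e₃+2)),
      chi ((eL q e₂ e₃).symm s₁).1 i * delta t₂ (jE e₂ ((eL q e₂ e₃).symm s₁).2.1)
        * delta k (kE e₃ ((eL q e₂ e₃).symm s₁).2.2) * Zc q e₂ e₃ (i, t₂, k)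
      = delta k (kE e₃ ((eL q e₂ e₃).symm s₁).2.2) *
          (chi ((eL q e₂ e₃).symm s₁).1 i * delta t₂ (jE e₂ ((eL q e₂ e₃).symm s₁).2.1)
            * Zc q e₂ e₃ (i, t₂, k)) := by
    intro i k; ring
  simp only [hre, sum_delta_mul, Zc_eval_kE]
  have hre2 : ∀ i : Fin (2*q+2),
      chi ((eL q e₂ e₃).symm s₁).1 i * delta t₂ (jE e₂ ((eL q e₂ e₃).symm s₁).2.1)
        * (sgn i * ind₂ t₂ * (1/2))
      = chi ((eL q e₂ e₃).symm s₁).1 i * sgn i *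
          (delta t₂ (jE e₂ ((eL q e₂ e₃).symm s₁).2.1) * ind₂ t₂ * (1/2)) := by
    intro i; ring
  simp only [hre2]
  rw [← Finset.sum_mul, sum_chi_sgn, zero_mul]

lemma bsum7 (t₁ : Fin (2*q+2)) (s₂ : Fin (q*e₂*e₃)) :
    ∑ j : Fin (e₂+2), ∑ k : Fin (e₃+2),
      Yc q e₂ e₃ (t₁, j, k) s₂ * Zc q e₂ e₃ (t₁, j, k) = 0 := by
  have h1 : ∀ j : Fin (e₂+2), ∑ k : Fin (e₃+2),
      Yc q e₂ e₃ (t₁, j, k) s₂ * Zc q e₂ e₃ (t₁, j, k)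
      = psi ((eL q e₂ e₃).symm s₂).1 t₁
          * (delta j (jE e₂ ((eL q e₂ e₃).symm s₂).2.1) - delta j 0)
          * Zc q e₂ e₃ (t₁, j, kE e₃ ((eL q e₂ e₃).symm s₂).2.2)
        + pii ((eL q e₂ e₃).symm s₂).1 t₁
          * (-(1/2) * delta j 0 + (1/2) * delta j (jT e₂)) * Zc q e₂ e₃ (t₁, j, 0) := by
    intro j
    simp only [Yc]
    have hre : ∀ k : Fin (e₃+2),
        (psi ((eL q e₂ e₃).symm s₂).1 t₁
            * (delta j (jE e₂ ((eL q e₂ e₃).symm s₂).2.1) - delta j 0)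
            * delta k (kE e₃ ((eL q e₂ e₃).symm s₂).2.2)
          + pii ((eL q e₂ e₃).symm s₂).1 t₁
            * (-(1/2) * delta j 0 + (1/2) * delta j (jT e₂)) * delta k 0)
          * Zc q e₂ e₃ (t₁, j, k)
        = delta k (kE e₃ ((eL q e₂ e₃).symm s₂).2.2) *
            (psi ((eL q e₂ e₃).symm s₂).1 t₁
              * (delta j (jE e₂ ((eL q e₂ e₃).symm s₂).2.1) - delta j 0)
              * Zc q e₂ e₃ (t₁, j, k))
          + delta k 0 *
            (pii ((eL q e₂ e₃).symm s₂).1 t₁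
              * (-(1/2) * delta j 0 + (1/2) * delta j (jT e₂)) * Zc q e₂ e₃ (t₁, j, k)) := by
      intro k; ring
    simp only [hre]
    rw [Finset.sum_add_distrib, sum_delta_mul, sum_delta_mul]
  simp only [h1, Zc_eval_kE, Zc_eval_zero]
  have hre2 : ∀ j : Fin (e₂+2),
      psi ((eL q e₂ e₃).symm s₂).1 t₁
          * (delta j (jE e₂ ((eL q e₂ e₃).symm s₂).2.1) - delta j 0)
          * (sgn t₁ * ind₂ j * (1/2))
        + pii ((eL q e₂ e₃).symm s₂).1 t₁
          * (-(1/2) * delta j 0 + (1/2) * delta j (jT e₂))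
          * (-(e₃:ℂ)/2 * (sgn t₁ * ind₂ j) + iot t₁ * delta j 0)
      = delta j (jE e₂ ((eL q e₂ e₃).symm s₂).2.1) *
          (psi ((eL q e₂ e₃).symm s₂).1 t₁ * sgn t₁ * ind₂ j * (1/2))
        + delta j 0 *
          (-(psi ((eL q e₂ e₃).symm s₂).1 t₁ * sgn t₁ * ind₂ j * (1/2))
            + pii ((eL q e₂ e₃).symm s₂).1 t₁ * (-(1/2))
              * (-(e₃:ℂ)/2 * (sgn t₁ * ind₂ j) + iot t₁ * delta j 0))
        + delta j (jT e₂) *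
          (pii ((eL q e₂ e₃).symm s₂).1 t₁ * (1/2)
            * (-(e₃:ℂ)/2 * (sgn t₁ * ind₂ j) + iot t₁ * delta j 0)) := by
    intro j; ring
  simp only [hre2]
  rw [Finset.sum_add_distrib, Finset.sum_add_distrib, sum_delta_mul, sum_delta_mul, sum_delta_mul]
  simp only [ind₂_jE, ind₂_zero, ind₂_jT, delta_jT_zero, delta_self]
  have := psi_sgn_eq_pii_iot ((eL q e₂ e₃).symm s₂).1 t₁
  linear_combination (1/2 : ℂ) * this

lemma bsum8 (s₁ s₂ : Fin (q*e₂*e₃)) :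
    ∑ i : Fin (2*q+2), ∑ j : Fin (e₂+2), ∑ k : Fin (e₃+2),
      Xc q e₂ e₃ (i, j, k) s₁ * (Yc q e₂ e₃ (i, j, k) s₂ * Zc q e₂ e₃ (i, j, k))
      = delta s₁ s₂ := by
  simp only [Xc]
  have hre : ∀ (i : Fin (2*q+2)) (j : Fin (e₂+2)) (k : Fin (e₃+2)),
      chi ((eL q e₂ e₃).symm s₁).1 i * delta j (jE e₂ ((eL q e₂ e₃).symm s₁).2.1)
        * delta k (kE e₃ ((eL q e₂ e₃).symm s₁).2.2)
        * (Yc q e₂ e₃ (i, j, k) s₂ * Zc q e₂ e₃ (i, j, k))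
      = delta j (jE e₂ ((eL q e₂ e₃).symm s₁).2.1) *
          (delta k (kE e₃ ((eL q e₂ e₃).symm s₁).2.2) *
            (chi ((eL q e₂ e₃).symm s₁).1 i
              * (Yc q e₂ e₃ (i, j, k) s₂ * Zc q e₂ e₃ (i, j, k)))) := by
    intro i j k; ring
  simp only [hre]
  simp only [← Finset.mul_sum, sum_delta_mul]
  simp only [Yc, Zc_eval_kE, jE_inj, kE_inj, delta_jE_zero, delta_jE_jT, delta_kE_zero,
    ind₂_jE]
  have hre2 : ∀ i : Fin (2*q+2),
      chi ((eL q e₂ e₃).symm s₁).1 i *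
        ((psi ((eL q e₂ e₃).symm s₂).1 i
            * (delta ((eL q e₂ e₃).symm s₁).2.1 ((eL q e₂ e₃).symm s₂).2.1 - 0)
            * delta ((eL q e₂ e₃).symm s₁).2.2 ((eL q e₂ e₃).symm s₂).2.2
          + pii ((eL q e₂ e₃).symm s₂).1 i * (-(1/2) * 0 + (1/2) * 0) * 0)
          * (sgn i * 1 * (1/2)))
      = chi ((eL q e₂ e₃).symm s₁).1 i * (psi ((eL q e₂ e₃).symm s₂).1 i * sgn i) *
          ((1/2) * (delta ((eL q e₂ e₃).symm s₁).2.1 ((eL q e₂ e₃).symm s₂).2.1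
            * delta ((eL q e₂ e₃).symm s₁).2.2 ((eL q e₂ e₃).symm s₂).2.2)) := by
    intro i; ring
  simp only [hre2]
  rw [← Finset.sum_mul]
  have hsum : ∑ i : Fin (2*q+2),
      chi ((eL q e₂ e₃).symm s₁).1 i * (psi ((eL q e₂ e₃).symm s₂).1 i * sgn i)
      = 2 * delta ((eL q e₂ e₃).symm s₁).1 ((eL q e₂ e₃).symm s₂).1 :=
    sum_chi_psi_sgn _ _
  rw [hsum]
  rw [← delta_eL_symm q e₂ e₃ s₁ s₂]
  rw [show (eL q e₂ e₃).symm s₁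
      = (((eL q e₂ e₃).symm s₁).1, ((eL q e₂ e₃).symm s₁).2.1, ((eL q e₂ e₃).symm s₁).2.2)
      from rfl]
  rw [show (eL q e₂ e₃).symm s₂
      = (((eL q e₂ e₃).symm s₂).1, ((eL q e₂ e₃).symm s₂).2.1, ((eL q e₂ e₃).symm s₂).2.2)
      from rfl]
  rw [delta_prod, delta_prod]
  ring

end Construction

section Main

open Filter Topology

lemma funext_fin4_sum_inl {ι κ : Fin 4 → Type} (x : ∀ i, ι i ⊕ κ i)
    (a : ι 0) (b : ι 1) (c : ι 2) (d : ι 3)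
    (h0 : x 0 = Sum.inl a) (h1 : x 1 = Sum.inl b) (h2 : x 2 = Sum.inl c)
    (h3 : x 3 = Sum.inl d) :
    x = fun i => Sum.inl (mk4 (τ := ι) a b c d i) := by
  funext i
  have hi : i = 0 ∨ i = 1 ∨ i = 2 ∨ i = 3 := by omega
  rcases hi with rfl | rfl | rfl | rfl
  · rw [h0]; rfl
  · rw [h1]; rfl
  · rw [h2]; rfl
  · rw [h3]; rfl

lemma funext_fin4_sum_inr {ι κ : Fin 4 → Type} (x : ∀ i, ι i ⊕ κ i)
    (a : κ 0) (b : κ 1) (c : κ 2) (d : κ 3)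
    (h0 : x 0 = Sum.inr a) (h1 : x 1 = Sum.inr b) (h2 : x 2 = Sum.inr c)
    (h3 : x 3 = Sum.inr d) :
    x = fun i => Sum.inr (mk4 (τ := κ) a b c d i) := by
  funext i
  have hi : i = 0 ∨ i = 1 ∨ i = 2 ∨ i = 3 := by omega
  rcases hi with rfl | rfl | rfl | rfl
  · rw [h0]; rfl
  · rw [h1]; rfl
  · rw [h2]; rfl
  · rw [h3]; rfl

def εseq (n : ℕ) : ℂ := (((n : ℝ) + 1)⁻¹ : ℝ)

lemma εseq_ne (n : ℕ) : εseq n ≠ 0 := by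
  simp only [εseq, Ne, Complex.ofReal_eq_zero]
  positivity

lemma εseq_tendsto : Tendsto εseq atTop (𝓝 0) := by
  have h : Tendsto (fun n : ℕ => ((n : ℝ) + 1)⁻¹) atTop (𝓝 0) := by
    simpa [one_div] using tendsto_one_div_add_atTop_nhds_zero_nat (𝕜 := ℝ)
  have h2 := (Complex.continuous_ofReal.tendsto 0).comp h
  exact h2

variable (q e₂ e₃ : ℕ)

lemma Tfam_apply_inr (ε : ℂ) (hε : ε ≠ 0) (x : ∀ i, cio q e₂ e₃ i)
    (s₄ : ![Fin (q*e₂*e₃), Fin (q*e₂*e₃), Fin 1, Fin 1] 3)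
    (hx3 : x 3 = Sum.inr s₄) :
    Tfam q e₂ e₃ ε x
      = dsum (spider3 (2*q+2) (e₂+2) (e₃+2)) (matTensor4 (q*e₂*e₃)) x := by
  unfold Tfam
  rw [Fintype.sum_option]
  simp only [Fin.prod_univ_four, vfam, mk4_zero, mk4_one, mk4_two, mk4_three, hx3,
    Sum.elim_inr]
  rcases hx0 : x 0 with (t₁ : Fin (2*q+2)) | (s₁ : Fin (q*e₂*e₃)) <;>
    rcases hx1 : x 1 with (t₂ : Fin (e₂+2)) | (s₂ : Fin (q*e₂*e₃)) <;>
    rcases hx2 : x 2 with (t₃ : Fin (e₃+2)) | (s₃ : Fin 1) <;>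
    simp only [hx0, hx1, hx2, Sum.elim]
  · -- inl inl inl
    rw [sum_delta3_mul t₁ t₂ t₃ (fun _ => (ε⁻¹)^3)]
    rw [dsum_apply_mixed _ _ x (i₀ := 0) (i₁ := 3) (by rw [hx0]; rfl) (by rw [hx3]; rfl)]
    ring
  · -- inl inl inr : t₁ t₂ s₃
    rw [sum_triple]
    have hre : ∀ (i : Fin (2*q+2)) (j : Fin (e₂+2)) (k : Fin (e₃+2)),
        delta i t₁ * delta j t₂ * (ε * Zc q e₂ e₃ (i, j, k)) * (ε⁻¹)^3
        = delta i t₁ * (delta j t₂ * ((ε * (ε⁻¹)^3) * Zc q e₂ e₃ (i, j, k))) := by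
      intro i j k; ring
    simp only [hre, ← Finset.mul_sum, sum_Zc, mul_zero, Finset.sum_const_zero]
    rw [dsum_apply_mixed _ _ x (i₀ := 0) (i₁ := 2) (by rw [hx0]; rfl) (by rw [hx2]; rfl)]
    ring
  · -- inl inr inl : t₁ s₂ t₃
    rw [sum_triple]
    have hre : ∀ (i : Fin (2*q+2)) (j : Fin (e₂+2)) (k : Fin (e₃+2)),
        delta i t₁ * (ε * Yc q e₂ e₃ (i, j, k) s₂) * delta k t₃ * (ε⁻¹)^3
        = delta i t₁ * (delta k t₃ * ((ε * (ε⁻¹)^3) * Yc q e₂ e₃ (i, j, k) s₂)) := by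
      intro i j k; ring
    simp only [hre, ← Finset.mul_sum, sum_delta_mul, sum_Yc, mul_zero, Finset.sum_const_zero]
    rw [dsum_apply_mixed _ _ x (i₀ := 0) (i₁ := 1) (by rw [hx0]; rfl) (by rw [hx1]; rfl)]
    ring
  · -- inl inr inr : t₁ s₂ s₃
    rw [sum_triple]
    have hre : ∀ (i : Fin (2*q+2)) (j : Fin (e₂+2)) (k : Fin (e₃+2)),
        delta i t₁ * (ε * Yc q e₂ e₃ (i, j, k) s₂) * (ε * Zc q e₂ e₃ (i, j, k)) * (ε⁻¹)^3
        = delta i t₁ * ((ε * ε * (ε⁻¹)^3) *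
            (Yc q e₂ e₃ (i, j, k) s₂ * Zc q e₂ e₃ (i, j, k))) := by
      intro i j k; ring
    simp only [hre, ← Finset.mul_sum, sum_delta_mul]
    rw [bsum7, dsum_apply_mixed _ _ x (i₀ := 0) (i₁ := 1) (by rw [hx0]; rfl) (by rw [hx1]; rfl)]
    ring
  · -- inr inl inl : s₁ t₂ t₃
    rw [sum_triple]
    have hre : ∀ (i : Fin (2*q+2)) (j : Fin (e₂+2)) (k : Fin (e₃+2)),
        (ε * Xc q e₂ e₃ (i, j, k) s₁) * delta j t₂ * delta k t₃ * (ε⁻¹)^3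
        = delta j t₂ * (delta k t₃ * ((ε * (ε⁻¹)^3) * Xc q e₂ e₃ (i, j, k) s₁)) := by
      intro i j k; ring
    simp only [hre, ← Finset.mul_sum, sum_delta_mul, bsum2, mul_zero, Finset.sum_const_zero]
    rw [dsum_apply_mixed _ _ x (i₀ := 1) (i₁ := 0) (by rw [hx1]; rfl) (by rw [hx0]; rfl)]
    ring
  · -- inr inl inr : s₁ t₂ s₃
    rw [sum_triple]
    have hre : ∀ (i : Fin (2*q+2)) (j : Fin (e₂+2)) (k : Fin (e₃+2)),
        (ε * Xc q e₂ e₃ (i, j, k) s₁) * delta j t₂ * (ε * Zc q e₂ e₃ (i, j, k)) * (ε⁻¹)^3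
        = delta j t₂ * ((ε * ε * (ε⁻¹)^3) *
            (Xc q e₂ e₃ (i, j, k) s₁ * Zc q e₂ e₃ (i, j, k))) := by
      intro i j k; ring
    simp only [hre, ← Finset.mul_sum, sum_delta_mul]
    rw [bsum6, dsum_apply_mixed _ _ x (i₀ := 1) (i₁ := 0) (by rw [hx1]; rfl) (by rw [hx0]; rfl)]
    ring
  · -- inr inr inl : s₁ s₂ t₃
    rw [sum_triple]
    have hre : ∀ (i : Fin (2*q+2)) (j : Fin (e₂+2)) (k : Fin (e₃+2)),
        (ε * Xc q e₂ e₃ (i, j, k) s₁) * (ε * Yc q e₂ e₃ (i, j, k) s₂) * delta k t₃ * (ε⁻¹)^3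
        = delta k t₃ * ((ε * ε * (ε⁻¹)^3) *
            (Xc q e₂ e₃ (i, j, k) s₁ * Yc q e₂ e₃ (i, j, k) s₂)) := by
      intro i j k; ring
    simp only [hre, ← Finset.mul_sum, sum_delta_mul]
    rw [bsum5, dsum_apply_mixed _ _ x (i₀ := 2) (i₁ := 0) (by rw [hx2]; rfl) (by rw [hx0]; rfl)]
    ring
  · -- inr inr inr : s₁ s₂ s₃
    rw [sum_triple]
    have hre : ∀ (i : Fin (2*q+2)) (j : Fin (e₂+2)) (k : Fin (e₃+2)),
        (ε * Xc q e₂ e₃ (i, j, k) s₁) * (ε * Yc q e₂ e₃ (i, j, k) s₂)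
            * (ε * Zc q e₂ e₃ (i, j, k)) * (ε⁻¹)^3
        = (ε * ε * ε * (ε⁻¹)^3) *
            (Xc q e₂ e₃ (i, j, k) s₁ * (Yc q e₂ e₃ (i, j, k) s₂ * Zc q e₂ e₃ (i, j, k))) := by
      intro i j k; ring
    simp only [hre, ← Finset.mul_sum]
    rw [bsum8]
    have hc : ε * ε * ε * (ε⁻¹)^3 = 1 := by
      field_simp
    rw [hc]
    have hxeq := funext_fin4_sum_inr x s₁ s₂ s₃ s₄ hx0 hx1 hx2 hx3
    rw [hxeq, dsum_apply_inr (by norm_num)]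
    simp only [matTensor4, mk4_zero, mk4_one]
    exact (by ring : (0:ℂ) * 0 * 0 * ε⁻¹ ^ 3 + 1 * delta s₁ s₂ = delta s₁ s₂)

end Main

section Main2

open Filter Topology

variable (q e₂ e₃ : ℕ)

lemma Tfam_tendsto :
    Tendsto (fun n : ℕ => Tfam q e₂ e₃ (εseq n)) atTop
      (𝓝 (dsum (spider3 (2*q+2) (e₂+2) (e₃+2)) (matTensor4 (q*e₂*e₃)))) := by
  rw [tendsto_pi_nhds]
  intro x
  rcases hx3 : x 3 with d | s₄
  · -- fourth slot in the spider part
    have hten : Tendsto (fun n => Tfam q e₂ e₃ (εseq n) x) atTop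
        (𝓝 (∑ p : Fin (2*q+2) × Fin (e₂+2) × Fin (e₃+2),
          Sum.elim (fun t => delta p.1 t) (fun _ => (0:ℂ)) (x 0)
          * Sum.elim (fun t => delta p.2.1 t) (fun _ => (0:ℂ)) (x 1)
          * Sum.elim (fun t => delta p.2.2 t) (fun _ => (0:ℂ)) (x 2) * delta p d)) := by
      have hval : ∀ n : ℕ, Tfam q e₂ e₃ (εseq n) x
          = ∑ p : Fin (2*q+2) × Fin (e₂+2) × Fin (e₃+2),
            Sum.elim (fun t => delta p.1 t) (fun t => εseq n * Xc q e₂ e₃ p t) (x 0)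
            * Sum.elim (fun t => delta p.2.1 t) (fun t => εseq n * Yc q e₂ e₃ p t) (x 1)
            * Sum.elim (fun t => delta p.2.2 t) (fun _ => εseq n * Zc q e₂ e₃ p) (x 2)
            * delta p d := by
        intro n
        unfold Tfam
        rw [Fintype.sum_option]
        simp only [Fin.prod_univ_four, vfam, mk4_zero, mk4_one, mk4_two, mk4_three, hx3,
          Sum.elim_inl, mul_zero, zero_add]
        rfl
      refine Tendsto.congr (fun n => (hval n).symm) ?_
      refine tendsto_finset_sum _ fun p _ => ?_
      have h0 : Tendsto (fun n =>
          Sum.elim (fun t => delta p.1 t) (fun t => εseq n * Xc q e₂ e₃ p t) (x 0)) atTop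
          (𝓝 (Sum.elim (fun t => delta p.1 t) (fun _ => (0:ℂ)) (x 0))) := by
        rcases hx0 : x 0 with t | s
        · simp only [Sum.elim]; exact tendsto_const_nhds
        · simp only [Sum.elim]
          simpa using εseq_tendsto.mul_const (Xc q e₂ e₃ p s)
      have h1 : Tendsto (fun n =>
          Sum.elim (fun t => delta p.2.1 t) (fun t => εseq n * Yc q e₂ e₃ p t) (x 1)) atTop
          (𝓝 (Sum.elim (fun t => delta p.2.1 t) (fun _ => (0:ℂ)) (x 1))) := by
        rcases hx1 : x 1 with t | s
        · simp only [Sum.elim]; exact tendsto_const_nhds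
        · simp only [Sum.elim]
          simpa using εseq_tendsto.mul_const (Yc q e₂ e₃ p s)
      have h2 : Tendsto (fun n =>
          Sum.elim (fun t => delta p.2.2 t) (fun _ => εseq n * Zc q e₂ e₃ p) (x 2)) atTop
          (𝓝 (Sum.elim (fun t => delta p.2.2 t) (fun _ => (0:ℂ)) (x 2))) := by
        rcases hx2 : x 2 with t | s
        · simp only [Sum.elim]; exact tendsto_const_nhds
        · simp only [Sum.elim]
          simpa using εseq_tendsto.mul_const (Zc q e₂ e₃ p)
      exact ((h0.mul h1).mul h2).mul tendsto_const_nhds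
    have hval2 : (∑ p : Fin (2*q+2) × Fin (e₂+2) × Fin (e₃+2),
          Sum.elim (fun t => delta p.1 t) (fun _ => (0:ℂ)) (x 0)
          * Sum.elim (fun t => delta p.2.1 t) (fun _ => (0:ℂ)) (x 1)
          * Sum.elim (fun t => delta p.2.2 t) (fun _ => (0:ℂ)) (x 2) * delta p d)
        = dsum (spider3 (2*q+2) (e₂+2) (e₃+2)) (matTensor4 (q*e₂*e₃)) x := by
      rcases hx0 : x 0 with t₁ | s₁
      case inr =>
        simp only [hx0, Sum.elim, zero_mul, Finset.sum_const_zero]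
        rw [dsum_apply_mixed _ _ x (i₀ := 3) (i₁ := 0) (by rw [hx3]; rfl) (by rw [hx0]; rfl)]
      case inl =>
      rcases hx1 : x 1 with t₂ | s₂
      case inr =>
        simp only [hx0, hx1, Sum.elim, mul_zero, zero_mul,
          Finset.sum_const_zero]
        rw [dsum_apply_mixed _ _ x (i₀ := 3) (i₁ := 1) (by rw [hx3]; rfl) (by rw [hx1]; rfl)]
      case inl =>
      rcases hx2 : x 2 with t₃ | s₃
      case inr =>
        simp only [hx0, hx1, hx2, Sum.elim, mul_zero, zero_mul,
          Finset.sum_const_zero]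
        rw [dsum_apply_mixed _ _ x (i₀ := 3) (i₁ := 2) (by rw [hx3]; rfl) (by rw [hx2]; rfl)]
      case inl =>
        simp only [hx0, hx1, hx2, Sum.elim]
        rw [sum_delta3_mul t₁ t₂ t₃ (fun p => delta p d)]
        have hxeq := funext_fin4_sum_inl x t₁ t₂ t₃ d hx0 hx1 hx2 hx3
        rw [hxeq, dsum_apply_inl (by norm_num)]
        simp only [spider3, mk4_zero, mk4_one, mk4_two, mk4_three]
        exact delta_comm _ _
    exact hval2 ▸ hten
  · -- fourth slot in the diagonal part: the value is constant
    refine Tendsto.congr (fun n => ?_) tendsto_const_nhds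
    exact (Tfam_apply_inr q e₂ e₃ (εseq n) (εseq_ne n) x s₄ hx3).symm

lemma upper_bound :
    HasBorderRankLE (dsum (spider3 (2*q+2) (e₂+2) (e₃+2)) (matTensor4 (q*e₂*e₃)))
      ((2*q+2)*(e₂+2)*(e₃+2) + 1) :=
  mem_closure_of_tendsto (Tfam_tendsto q e₂ e₃)
    (Filter.Eventually.of_forall fun n => Tfam_hasRankLE q e₂ e₃ (εseq n))

end Main2
/-- Strict subadditivity of border rank under direct sum for tensors of
order four: with `n₁, n₂, n₃ ≥ 2`, `n₁` odd, `(n₁−1)(n₂−1)(n₃−1) ≥ 4` and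
`N = (n₁−1)(n₂−1)(n₃−1)/2`, we have `R̲(T₁ ⊕ T₂) < R̲(T₁) + R̲(T₂)`. -/
theorem strict_subadditivity_order_four (n₁ n₂ n₃ N : ℕ)
    (h₁ : 2 ≤ n₁) (h₂ : 2 ≤ n₂) (h₃ : 2 ≤ n₃) (hodd : Odd n₁)
    (hbig : 4 ≤ (n₁ - 1) * (n₂ - 1) * (n₃ - 1))
    (hN : N = (n₁ - 1) * (n₂ - 1) * (n₃ - 1) / 2) :
    borderRank (dsum (spider3 (n₁ + 1) (n₂ + 1) (n₃ + 1)) (matTensor4 N)) <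
      borderRank (spider3 (n₁ + 1) (n₂ + 1) (n₃ + 1)) + borderRank (matTensor4 N) := by
  obtain ⟨q, hq⟩ := hodd
  have h1' : n₁ + 1 = 2*q + 2 := by omega
  have h2' : n₂ + 1 = (n₂ - 1) + 2 := by omega
  have h3' : n₃ + 1 = (n₃ - 1) + 2 := by omega
  have e1 : n₁ - 1 = 2*q := by omega
  have hNeq : N = q * (n₂ - 1) * (n₃ - 1) := by
    rw [hN, e1, show 2*q*(n₂-1)*(n₃-1) = 2*(q*(n₂-1)*(n₃-1)) from by ring,
      Nat.mul_div_cancel_left _ (by norm_num : 0 < 2)]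
  have hN2 : 2 ≤ q * (n₂ - 1) * (n₃ - 1) := by
    rw [e1, show 2*q*(n₂-1)*(n₃-1) = 2*(q*(n₂-1)*(n₃-1)) from by ring] at hbig
    omega
  rw [h1', h2', h3', hNeq]
  have hub : borderRank (dsum (spider3 (2*q+2) ((n₂-1)+2) ((n₃-1)+2))
        (matTensor4 (q*(n₂-1)*(n₃-1))))
      ≤ (2*q+2)*((n₂-1)+2)*((n₃-1)+2) + 1 :=
    Nat.sInf_le (upper_bound q (n₂-1) (n₃-1))
  have hlb1 := le_borderRank_spider3 (2*q+2) ((n₂-1)+2) ((n₃-1)+2)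
  have hlb2 := le_borderRank_matTensor4 (q*(n₂-1)*(n₃-1))
  set A := (2*q+2)*((n₂-1)+2)*((n₃-1)+2) with hA
  set C := q*(n₂-1)*(n₃-1) with hC
  omega

end
end Subadditivity
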